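/- Let Σ = diag(σ₁,…,σ_p) with σᵢ ≥ 0 and Σᵢ σᵢ² = 1, and let ξ, η be independent standard Gaussian vectors in ℝ^p. Then ζ = ξᵀΣη satisfies the tail bound: Pr(|ζ| > t) ≤ 2 exp(−(t−√p)²/(4√p)) for √p ≤ t ≤ 2√p, and Pr(|ζ| > t) ≤ 2 exp(−(2t−3√p)/4) for t ≥ 2√p. -/

import Mathlib

open MeasureTheory ProbabilityTheory
open scoped BigOperators ENNReal

lemma lintegral_finset_prod_iIndepFun {Ω ι : Type*} [MeasurableSpace Ω] {μ : Measure Ω}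
    [IsProbabilityMeasure μ] {f : ι → Ω → ℝ≥0∞}
    (hindep : iIndepFun f μ) (hmeas : ∀ i, Measurable (f i))
    (s : Finset ι) :
    ∫⁻ ω, ∏ i ∈ s, f i ω ∂μ = ∏ i ∈ s, ∫⁻ ω, f i ω ∂μ := by
  classical
  induction s using Finset.induction_on with
  | empty => simp
  | @insert i s hi ih =>
    rw [Finset.prod_insert hi]
    have hind : IndepFun (f i) (∏ j ∈ s, f j) μ :=
      (hindep.indepFun_finsetProd_of_notMem hmeas hi).symm
    have hind' : IndepFun (f i) (fun ω => ∏ j ∈ s, f j ω) μ := by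
      have : (∏ j ∈ s, f j) = fun ω => ∏ j ∈ s, f j ω := by
        funext ω; simp [Finset.prod_apply]
      rwa [this] at hind
    have := lintegral_mul_eq_lintegral_mul_lintegral_of_indepFun''
      (hmeas i).aemeasurable
      (Finset.measurable_prod s fun j _ => hmeas j).aemeasurable hind'
    rw [← ih]
    simp only [Finset.prod_insert hi]
    exact this

lemma gaussian_lint_sq {c : ℝ} (hc : c < 1/2) :
    ∫⁻ x, ENNReal.ofReal (Real.exp (c * x ^ 2)) ∂(gaussianReal 0 1) =
      ENNReal.ofReal ((Real.sqrt (1 - 2 * c))⁻¹) := by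
  have hb : (0:ℝ) < 1/2 - c := by linarith
  rw [gaussianReal_of_var_ne_zero 0 one_ne_zero,
    lintegral_withDensity_eq_lintegral_mul _ (measurable_gaussianPDF 0 1)
      (by measurability)]
  have key : ∀ x : ℝ, gaussianPDFReal 0 1 x * Real.exp (c * x ^ 2)
      = (Real.sqrt (2 * Real.pi))⁻¹ * Real.exp (-(1/2 - c) * x ^ 2) := by
    intro x
    rw [gaussianPDFReal]
    push_cast
    rw [mul_assoc, ← Real.exp_add, mul_one, mul_one]
    congr 1
    ring
  have heq : ∀ x : ℝ, (gaussianPDF 0 1 * fun x => ENNReal.ofReal (Real.exp (c * x ^ 2))) x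
      = ENNReal.ofReal ((Real.sqrt (2 * Real.pi))⁻¹ * Real.exp (-(1/2 - c) * x ^ 2)) := by
    intro x
    simp only [Pi.mul_apply, gaussianPDF]
    rw [← ENNReal.ofReal_mul (gaussianPDFReal_nonneg 0 1 x), key x]
  simp_rw [heq]
  have hint : Integrable (fun x : ℝ => (Real.sqrt (2 * Real.pi))⁻¹
      * Real.exp (-(1/2 - c) * x ^ 2)) := (integrable_exp_neg_mul_sq hb).const_mul _
  rw [← ofReal_integral_eq_lintegral_ofReal hint
    (Filter.Eventually.of_forall fun x => by positivity)]
  congr 1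
  rw [integral_const_mul, integral_gaussian]
  have h2 : (0:ℝ) < 2 * Real.pi := by positivity
  rw [Real.sqrt_div Real.pi_nonneg, Real.sqrt_mul (by norm_num : (0:ℝ) ≤ 2)]
  have h3 : (1:ℝ) - 2 * c = 2 * (1/2 - c) := by ring
  rw [h3, Real.sqrt_mul (by norm_num : (0:ℝ) ≤ 2)]
  have hπ : Real.sqrt Real.pi > 0 := Real.sqrt_pos.2 Real.pi_pos
  have hbb : Real.sqrt (1/2 - c) > 0 := Real.sqrt_pos.2 hb
  have hcc : (0:ℝ) < 1 - 2 * c := by linarith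
  field_simp

lemma inv_one_sub_le_exp {x : ℝ} (h0 : 0 ≤ x) (h1 : x ≤ 1/2) :
    (1 - x)⁻¹ ≤ Real.exp (x + x^2) := by
  have hu : (0:ℝ) ≤ x + x^2 := by positivity
  have hs := Real.sum_le_exp_of_nonneg hu 4
  have hx1 : (0:ℝ) < 1 - x := by linarith
  rw [Finset.sum_range_succ, Finset.sum_range_succ, Finset.sum_range_succ,
    Finset.sum_range_succ] at hs
  norm_num at hs
  norm_num [Nat.factorial] at hs
  rw [inv_le_iff_one_le_mul₀ hx1]
  nlinarith [sq_nonneg x, sq_nonneg (x - 1/2), pow_nonneg h0 3, pow_nonneg h0 4]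

lemma sqrt_inv_le_exp {x : ℝ} (h0 : 0 ≤ x) (h1 : x ≤ 1/2) :
    (Real.sqrt (1 - x))⁻¹ ≤ Real.exp ((x + x^2)/2) := by
  have h := inv_one_sub_le_exp h0 h1
  have hx1 : (0:ℝ) < 1 - x := by linarith
  have hse : Real.sqrt (Real.exp (x + x^2)) = Real.exp ((x + x^2)/2) := by
    rw [show Real.exp (x + x^2) = Real.exp ((x+x^2)/2) * Real.exp ((x+x^2)/2) by
      rw [← Real.exp_add]; ring_nf, Real.sqrt_mul_self (Real.exp_nonneg _)]
  rw [← hse, ← Real.sqrt_inv]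
  exact Real.sqrt_le_sqrt h

lemma chernoff_key {Ω : Type*} [MeasurableSpace Ω] (μ : Measure Ω) [IsProbabilityMeasure μ]
    {p : ℕ} (σ : Fin p → ℝ) (hσ : ∀ i, 0 ≤ σ i) (hσ2 : ∑ i, σ i ^ 2 = 1)
    (ξ η : Ω → Fin p → ℝ)
    (hmξ : ∀ i, Measurable fun ω => ξ ω i) (hmη : ∀ i, Measurable fun ω => η ω i)
    (hξ : ∀ i, Measure.map (fun ω => ξ ω i) μ = gaussianReal 0 1)
    (hη : ∀ i, Measure.map (fun ω => η ω i) μ = gaussianReal 0 1)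
    (hindep : iIndepFun
      (Sum.elim (fun i (ω : Ω) => ξ ω i) (fun i (ω : Ω) => η ω i) : Fin p ⊕ Fin p → Ω → ℝ) μ)
    (t s : ℝ) (hs0 : 0 ≤ s) (hs2 : s ≤ 1/2) :
    μ {ω | t < |∑ i, σ i * ξ ω i * η ω i|}
      ≤ ENNReal.ofReal (Real.exp (-(s*t) + (s^2+s) * Real.sqrt p)) := by
  classical
  -- basic facts
  have hp : 0 < p := by
    by_contra h
    push_neg at h
    interval_cases p
    simp at hσ2
  have hp1 : (1:ℝ) ≤ p := by exact_mod_cast hp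
  have hr1 : (1:ℝ) ≤ Real.sqrt p := by
    rw [show (1:ℝ) = Real.sqrt 1 by simp]
    exact Real.sqrt_le_sqrt hp1
  have hσ1 : ∀ i, σ i ≤ 1 := by
    intro i
    have h1 : σ i ^ 2 ≤ 1 := by
      rw [← hσ2]
      exact Finset.single_le_sum (fun j _ => sq_nonneg (σ j)) (Finset.mem_univ i)
    nlinarith [hσ i]
  have hσsum : ∑ i, σ i ≤ Real.sqrt p := by
    have h1 : (∑ i, σ i)^2 ≤ (p:ℝ) := by
      have := sq_sum_le_card_mul_sum_sq (s := (Finset.univ : Finset (Fin p))) (f := σ)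
      simpa [hσ2] using this
    have h2 : (0:ℝ) ≤ ∑ i, σ i := Finset.sum_nonneg fun i _ => hσ i
    calc ∑ i, σ i = Real.sqrt ((∑ i, σ i)^2) := (Real.sqrt_sq h2).symm
      _ ≤ Real.sqrt p := Real.sqrt_le_sqrt h1
  -- notation
  set Z : Ω → ℝ := fun ω => ∑ i, σ i * ξ ω i * η ω i with hZ
  have hZm : Measurable Z := by
    apply Finset.measurable_sum
    intro i _
    exact ((hmξ i).const_mul (σ i)).mul (hmη i)
  set X : Fin p ⊕ Fin p → Ω → ℝ :=
    (Sum.elim (fun i (ω : Ω) => ξ ω i) (fun i (ω : Ω) => η ω i)) with hX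
  have hXm : ∀ k, Measurable (X k) := by rintro (i | i); exacts [hmξ i, hmη i]
  set τ : Fin p ⊕ Fin p → ℝ := fun k => σ (Sum.elim id id k) with hτ
  set g : Fin p ⊕ Fin p → ℝ → ℝ≥0∞ :=
    fun k x => ENNReal.ofReal (Real.exp (s * τ k / 2 * x ^ 2)) with hg
  have hgm : ∀ k, Measurable (g k) := by
    intro k
    exact ENNReal.measurable_ofReal.comp
      ((Real.measurable_exp).comp ((measurable_id.pow_const 2).const_mul _))
  have hFindep : iIndepFun (fun k => g k ∘ X k) μ :=
    hindep.comp g hgm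
  have hFm : ∀ k, Measurable (g k ∘ X k) := fun k => (hgm k).comp (hXm k)
  -- pointwise bound
  have hpt : ∀ ω, ENNReal.ofReal (Real.exp (s * |Z ω|)) ≤ ∏ k, (g k ∘ X k) ω := by
    intro ω
    have h1 : |Z ω| ≤ ∑ i, σ i * (ξ ω i ^ 2 + η ω i ^ 2) / 2 := by
      refine (Finset.abs_sum_le_sum_abs _ _).trans (Finset.sum_le_sum fun i _ => ?_)
      rw [abs_mul, abs_mul, abs_of_nonneg (hσ i)]
      nlinarith [sq_nonneg (|ξ ω i| - |η ω i|), abs_nonneg (ξ ω i), abs_nonneg (η ω i),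
        sq_abs (ξ ω i), sq_abs (η ω i), hσ i]
    have h2 : s * |Z ω| ≤ ∑ k, s * τ k / 2 * (X k ω) ^ 2 := by
      rw [Fintype.sum_sum_type]
      have : ∑ i, s * τ (Sum.inl i) / 2 * (X (Sum.inl i) ω)^2
          + ∑ i, s * τ (Sum.inr i) / 2 * (X (Sum.inr i) ω)^2
          = s * ∑ i, σ i * (ξ ω i ^ 2 + η ω i ^ 2) / 2 := by
        simp only [hτ, hX, Sum.elim_inl, Sum.elim_inr, id]
        rw [Finset.mul_sum, ← Finset.sum_add_distrib]
        congr 1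
        funext i
        ring
      rw [this]
      exact mul_le_mul_of_nonneg_left h1 hs0
    calc ENNReal.ofReal (Real.exp (s * |Z ω|))
        ≤ ENNReal.ofReal (Real.exp (∑ k, s * τ k / 2 * (X k ω) ^ 2)) :=
          ENNReal.ofReal_le_ofReal (Real.exp_le_exp.2 h2)
      _ = ∏ k, (g k ∘ X k) ω := by
          rw [Real.exp_sum, ENNReal.ofReal_prod_of_nonneg
            (fun k _ => (Real.exp_pos _).le)]
          rfl
  -- per-coordinate integral
  have hone : ∀ k, ∫⁻ ω, (g k ∘ X k) ω ∂μ
      = ENNReal.ofReal ((Real.sqrt (1 - s * τ k))⁻¹) := by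
    intro k
    have hmap : Measure.map (X k) μ = gaussianReal 0 1 := by
      rcases k with i | i
      · exact hξ i
      · exact hη i
    have : ∫⁻ ω, (g k ∘ X k) ω ∂μ = ∫⁻ x, g k x ∂(Measure.map (X k) μ) :=
      (lintegral_map (hgm k) (hXm k)).symm
    rw [this, hmap]
    have hτk0 : 0 ≤ τ k := hσ _
    have hτk1 : τ k ≤ 1 := hσ1 _
    have hc : s * τ k / 2 < 1/2 := by nlinarith
    have := gaussian_lint_sq hc
    rw [hg]
    simp only []
    rw [this]
    congr 2
    ring
  -- Chernoff
  set ε : ℝ≥0∞ := ENNReal.ofReal (Real.exp (s * t)) with hε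
  have hε0 : ε ≠ 0 := by
    simp [hε, ENNReal.ofReal_eq_zero, not_le, Real.exp_pos]
  have hεtop : ε ≠ ⊤ := ENNReal.ofReal_ne_top
  have hmarkov : μ {ω | t < |Z ω|} ≤ ε⁻¹ * ∫⁻ ω, ∏ k, (g k ∘ X k) ω ∂μ := by
    have hsub : {ω | t < |Z ω|} ⊆ {ω | ε ≤ ENNReal.ofReal (Real.exp (s * |Z ω|))} := by
      intro ω hω
      exact ENNReal.ofReal_le_ofReal (Real.exp_le_exp.2
        (mul_le_mul_of_nonneg_left (le_of_lt hω) hs0))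
    have hfm : AEMeasurable (fun ω => ENNReal.ofReal (Real.exp (s * |Z ω|))) μ := by
      exact (ENNReal.measurable_ofReal.comp
        (Real.measurable_exp.comp (hZm.abs.const_mul s))).aemeasurable
    have h1 := mul_meas_ge_le_lintegral₀ hfm ε
    have h2 : μ {ω | t < |Z ω|} ≤ μ {ω | ε ≤ ENNReal.ofReal (Real.exp (s * |Z ω|))} :=
      measure_mono hsub
    have h3 : ∫⁻ ω, ENNReal.ofReal (Real.exp (s * |Z ω|)) ∂μ
        ≤ ∫⁻ ω, ∏ k, (g k ∘ X k) ω ∂μ := lintegral_mono fun ω => hpt ω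
    calc μ {ω | t < |Z ω|} ≤ ε⁻¹ * (ε * μ {ω | t < |Z ω|}) := by
          rw [← mul_assoc, ENNReal.inv_mul_cancel hε0 hεtop, one_mul]
      _ ≤ ε⁻¹ * ∫⁻ ω, ∏ k, (g k ∘ X k) ω ∂μ := by
          refine mul_le_mul_right ?_ ε⁻¹
          refine le_trans (mul_le_mul_right h2 ε) (le_trans h1 h3)
  -- factorize and bound
  have hprod : ∫⁻ ω, ∏ k, (g k ∘ X k) ω ∂μ
      ≤ ENNReal.ofReal (Real.exp ((s^2 + s) * Real.sqrt p)) := by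
    rw [show (fun ω => ∏ k, (g k ∘ X k) ω) = fun ω => ∏ k ∈ Finset.univ, (g k ∘ X k) ω from rfl]
    rw [lintegral_finset_prod_iIndepFun hFindep hFm]
    have : ∏ k, ∫⁻ ω, (g k ∘ X k) ω ∂μ
        = ENNReal.ofReal (∏ k : Fin p ⊕ Fin p, (Real.sqrt (1 - s * τ k))⁻¹) := by
      rw [ENNReal.ofReal_prod_of_nonneg (fun k _ => by positivity)]
      exact Finset.prod_congr rfl fun k _ => hone k
    rw [this]
    apply ENNReal.ofReal_le_ofReal
    have hx : ∀ k : Fin p ⊕ Fin p, 0 ≤ s * τ k ∧ s * τ k ≤ 1/2 := by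
      intro k
      constructor
      · exact mul_nonneg hs0 (hσ _)
      · nlinarith [hσ1 (Sum.elim id id k), hσ (Sum.elim id id k)]
    calc ∏ k : Fin p ⊕ Fin p, (Real.sqrt (1 - s * τ k))⁻¹
        ≤ ∏ k : Fin p ⊕ Fin p, Real.exp ((s * τ k + (s * τ k)^2)/2) := by
          apply Finset.prod_le_prod (fun k _ => by positivity)
          intro k _
          exact sqrt_inv_le_exp (hx k).1 (hx k).2
      _ = Real.exp (∑ k : Fin p ⊕ Fin p, (s * τ k + (s * τ k)^2)/2) := (Real.exp_sum _ _).symm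
      _ ≤ Real.exp ((s^2 + s) * Real.sqrt p) := by
          apply Real.exp_le_exp.2
          rw [Fintype.sum_sum_type]
          have he : ∀ (f : Fin p → ℝ), ∑ i, (s * σ i + (s * σ i)^2)/2
              = (s * ∑ i, σ i + s^2 * ∑ i, σ i ^ 2)/2 := by
            intro f
            rw [Finset.mul_sum, Finset.mul_sum, ← Finset.sum_div, ← Finset.sum_add_distrib]
            congr 1
            apply Finset.sum_congr rfl
            intro i _
            ring
          simp only [hτ, Sum.elim_inl, Sum.elim_inr, id]
          rw [he σ, hσ2]
          nlinarith [hσsum, Real.sqrt_nonneg (p:ℝ), sq_nonneg s]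
  calc μ {ω | t < |Z ω|} ≤ ε⁻¹ * ∫⁻ ω, ∏ k, (g k ∘ X k) ω ∂μ := hmarkov
    _ ≤ ε⁻¹ * ENNReal.ofReal (Real.exp ((s^2 + s) * Real.sqrt p)) := mul_le_mul_right hprod _
    _ = ENNReal.ofReal (Real.exp (-(s*t) + (s^2+s) * Real.sqrt p)) := by
        rw [hε, ← ENNReal.ofReal_inv_of_pos (Real.exp_pos _), ← Real.exp_neg,
          ← ENNReal.ofReal_mul (Real.exp_nonneg _), ← Real.exp_add]

theorem stmt14 {Ω : Type*} [MeasurableSpace Ω] (μ : Measure Ω) [IsProbabilityMeasure μ]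
    {p : ℕ} (σ : Fin p → ℝ) (hσ : ∀ i, 0 ≤ σ i) (hσ2 : ∑ i, σ i ^ 2 = 1)
    (ξ η : Ω → Fin p → ℝ)
    (hmξ : ∀ i, Measurable fun ω => ξ ω i) (hmη : ∀ i, Measurable fun ω => η ω i)
    (hξ : ∀ i, Measure.map (fun ω => ξ ω i) μ = gaussianReal 0 1)
    (hη : ∀ i, Measure.map (fun ω => η ω i) μ = gaussianReal 0 1)
    (hindep : iIndepFun
      (Sum.elim (fun i (ω : Ω) => ξ ω i) (fun i (ω : Ω) => η ω i) : Fin p ⊕ Fin p → Ω → ℝ) μ)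
    (t : ℝ) :
    (Real.sqrt p ≤ t → t ≤ 2 * Real.sqrt p →
      μ {ω | t < |∑ i, σ i * ξ ω i * η ω i|}
        ≤ ENNReal.ofReal (2 * Real.exp (-(t - Real.sqrt p) ^ 2 / (4 * Real.sqrt p)))) ∧
    (2 * Real.sqrt p ≤ t →
      μ {ω | t < |∑ i, σ i * ξ ω i * η ω i|}
        ≤ ENNReal.ofReal (2 * Real.exp (-(2 * t - 3 * Real.sqrt p) / 4))) := by
  have hp : 0 < p := by
    by_contra h
    push_neg at h
    interval_cases p
    simp at hσ2
  have hr : (0:ℝ) < Real.sqrt p := Real.sqrt_pos.2 (by exact_mod_cast hp)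
  set r := Real.sqrt p with hrdef
  constructor
  · intro h1 h2
    set s : ℝ := (t - r) / (2 * r) with hsdef
    have hs0 : 0 ≤ s := div_nonneg (by linarith) (by linarith)
    have hs2 : s ≤ 1/2 := by
      rw [div_le_iff₀ (by linarith)]
      linarith
    refine (chernoff_key μ σ hσ hσ2 ξ η hmξ hmη hξ hη hindep t s hs0 hs2).trans ?_
    apply ENNReal.ofReal_le_ofReal
    have hexp : -(s*t) + (s^2+s) * r = -(t - r)^2 / (4 * r) := by
      rw [hsdef]
      field_simp
      ring
    rw [hexp]
    nlinarith [Real.exp_pos (-(t - r)^2 / (4 * r))]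
  · intro h1
    have hs0 : (0:ℝ) ≤ 1/2 := by norm_num
    refine (chernoff_key μ σ hσ hσ2 ξ η hmξ hmη hξ hη hindep t (1/2) hs0 le_rfl).trans ?_
    apply ENNReal.ofReal_le_ofReal
    have hexp : -((1/2:ℝ)*t) + ((1/2)^2+(1/2)) * r = -(2*t - 3*r) / 4 := by ring
    rw [hexp]
    nlinarith [Real.exp_pos (-(2*t - 3*r) / 4)]
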